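/- There exists a ∈ H with t(a) = −a such that for every nonzero w ∈ W the number i·⟨w, σ(w)·a⟩ is real and strictly positive (i.e., the Hermitian form h_a(w, w') := i·⟨w, σ(w')·a⟩ is positive definite on W); together with the total isotropy of W for ω_a(x,y) := ⟨x, y·a⟩, this says ω_a polarizes the weight 1 Hodge structure with H^{1,0}-part W. -/

import Mathlib

open scoped TensorProduct

noncomputable section

/-- Complex conjugation on `ℂ` as a `ℚ`-algebra homomorphism. -/
def conjQAlg : ℂ →ₐ[ℚ] ℂ := (Complex.conjAe.restrictScalars ℚ).toAlgHom

variable (H : Type) [Ring H] [Algebra ℚ H] [FiniteDimensional ℚ H]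

/-- The conjugate-linear involution of `H_ℂ = ℂ ⊗[ℚ] H` fixing `H`. -/
def sigmaC : ℂ ⊗[ℚ] H →ₗ[ℚ] ℂ ⊗[ℚ] H :=
  (Algebra.TensorProduct.map conjQAlg (AlgHom.id ℚ H)).toLinearMap

/-- The inclusion of `H` into `H_ℂ = ℂ ⊗[ℚ] H`. -/
def inclH : H →ₐ[ℚ] ℂ ⊗[ℚ] H := Algebra.TensorProduct.includeRight

/-- The data of a polarized weight 2 Hodge structure on a finite-dimensional `ℚ`-algebra `H`,
compatible with the ring structure:
(i) a Hodge decomposition `H_ℂ = H^{2,0} ⊕ H^{1,1} ⊕ H^{0,2}` with `σ(H^{2,0}) = H^{0,2}`,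
`σ(H^{1,1}) = H^{1,1}`;
(ii) a polarization: a symmetric `ℚ`-bilinear form `B` on `H` with `ℂ`-bilinear extension `BC`
to `H_ℂ`, whose associated Hermitian pairing `h(α,β) := BC α (σ β)` makes the Hodge pieces
pairwise orthogonal and is positive definite on `H^{2,0}`, `H^{0,2}` and negative definite on
`H^{1,1}`;
(iii) the product is a morphism of Hodge structures of bidegree `(-1,-1)`:
`H^{p,q}·H^{p',q'} ⊆ H^{p+p'-1,q+q'-1}`;
(iv) an adjunction `t`: a `ℚ`-linear involution with `t(ab) = t(b)t(a)`,
`⟨ab,c⟩ = ⟨b, t(a)c⟩` and `⟨ab,c⟩ = ⟨a, c·t(b)⟩`. -/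
structure HodgeAlgebraData where
  H20 : Submodule ℂ (ℂ ⊗[ℚ] H)
  H11 : Submodule ℂ (ℂ ⊗[ℚ] H)
  H02 : Submodule ℂ (ℂ ⊗[ℚ] H)
  sup_top : H20 ⊔ H11 ⊔ H02 = ⊤
  disj1 : H20 ⊓ (H11 ⊔ H02) = ⊥
  disj2 : H11 ⊓ H02 = ⊥
  sigma_20 : ∀ x ∈ H20, sigmaC H x ∈ H02
  sigma_02 : ∀ x ∈ H02, sigmaC H x ∈ H20
  sigma_11 : ∀ x ∈ H11, sigmaC H x ∈ H11
  B : H →ₗ[ℚ] H →ₗ[ℚ] ℚ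
  B_symm : ∀ a b : H, B a b = B b a
  BC : (ℂ ⊗[ℚ] H) →ₗ[ℂ] (ℂ ⊗[ℚ] H) →ₗ[ℂ] ℂ
  BC_extends : ∀ a b : H, BC (inclH H a) (inclH H b) = (B a b : ℂ)
  BC_symm : ∀ x y, BC x y = BC y x
  BC_conj : ∀ x y, BC (sigmaC H x) (sigmaC H y) = starRingEnd ℂ (BC x y)
  orth_20_11 : ∀ x ∈ H20, ∀ y ∈ H11, BC x (sigmaC H y) = 0
  orth_20_02 : ∀ x ∈ H20, ∀ y ∈ H02, BC x (sigmaC H y) = 0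
  orth_11_02 : ∀ x ∈ H11, ∀ y ∈ H02, BC x (sigmaC H y) = 0
  pos_20 : ∀ x ∈ H20, x ≠ 0 → 0 < (BC x (sigmaC H x)).re ∧ (BC x (sigmaC H x)).im = 0
  pos_02 : ∀ x ∈ H02, x ≠ 0 → 0 < (BC x (sigmaC H x)).re ∧ (BC x (sigmaC H x)).im = 0
  neg_11 : ∀ x ∈ H11, x ≠ 0 → (BC x (sigmaC H x)).re < 0 ∧ (BC x (sigmaC H x)).im = 0
  mul_20_20 : ∀ x ∈ H20, ∀ y ∈ H20, x * y = 0
  mul_20_11 : ∀ x ∈ H20, ∀ y ∈ H11, x * y ∈ H20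
  mul_11_20 : ∀ x ∈ H11, ∀ y ∈ H20, x * y ∈ H20
  mul_11_11 : ∀ x ∈ H11, ∀ y ∈ H11, x * y ∈ H11
  mul_20_02 : ∀ x ∈ H20, ∀ y ∈ H02, x * y ∈ H11
  mul_02_20 : ∀ x ∈ H02, ∀ y ∈ H20, x * y ∈ H11
  mul_02_02 : ∀ x ∈ H02, ∀ y ∈ H02, x * y = 0
  mul_11_02 : ∀ x ∈ H11, ∀ y ∈ H02, x * y ∈ H02
  mul_02_11 : ∀ x ∈ H02, ∀ y ∈ H11, x * y ∈ H02
  t : H →ₗ[ℚ] H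
  t_invol : ∀ a : H, t (t a) = a
  t_mul : ∀ a b : H, t (a * b) = t b * t a
  adj_left : ∀ a b c : H, B (a * b) c = B b (t a * c)
  adj_right : ∀ a b c : H, B (a * b) c = B a (c * t b)

variable {H}

/-- `W := H^{2,0}·H_ℂ`, the `ℂ`-linear span of all products `x·y` with `x ∈ H^{2,0}`,
`y ∈ H_ℂ`. -/
def HodgeAlgebraData.W (D : HodgeAlgebraData H) : Submodule ℂ (ℂ ⊗[ℚ] H) := D.H20 * ⊤

/-- `σ(W)`, the image of `W` under the conjugation `σ`, as a `ℚ`-subspace of `H_ℂ`. -/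
def HodgeAlgebraData.sigmaW (D : HodgeAlgebraData H) : Submodule ℚ (ℂ ⊗[ℚ] H) :=
  (D.W.restrictScalars ℚ).map (sigmaC H)

/-- The `ℂ`-linear extension of `t` to `H_ℂ`. -/
def HodgeAlgebraData.tC (D : HodgeAlgebraData H) : ℂ ⊗[ℚ] H →ₗ[ℂ] ℂ ⊗[ℚ] H :=
  LinearMap.baseChange ℂ D.t


section Basics
set_option linter.unusedSectionVars false

variable (H)

lemma inclH_apply (a : H) : inclH H a = (1:ℂ) ⊗ₜ[ℚ] a := rfl

lemma sigmaC_tmul (c : ℂ) (a : H) :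
    sigmaC H (c ⊗ₜ[ℚ] a) = (starRingEnd ℂ c) ⊗ₜ[ℚ] a := rfl

lemma sigmaC_mul (x y : ℂ ⊗[ℚ] H) :
    sigmaC H (x * y) = sigmaC H x * sigmaC H y :=
  map_mul (Algebra.TensorProduct.map conjQAlg (AlgHom.id ℚ H)) x y

lemma sigmaC_one : sigmaC H (1 : ℂ ⊗[ℚ] H) = 1 :=
  map_one (Algebra.TensorProduct.map conjQAlg (AlgHom.id ℚ H))

lemma sigmaC_smul (c : ℂ) (x : ℂ ⊗[ℚ] H) :
    sigmaC H (c • x) = (starRingEnd ℂ c) • sigmaC H x := by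
  induction x using TensorProduct.induction_on with
  | zero => simp
  | tmul d a =>
      simp only [TensorProduct.smul_tmul', sigmaC_tmul, smul_eq_mul, map_mul]
  | add x y hx hy => rw [smul_add, map_add, hx, hy, map_add, smul_add]

lemma sigmaC_sigmaC (x : ℂ ⊗[ℚ] H) : sigmaC H (sigmaC H x) = x := by
  induction x using TensorProduct.induction_on with
  | zero => simp
  | tmul d a => rw [sigmaC_tmul, sigmaC_tmul, Complex.conj_conj]
  | add x y hx hy => rw [map_add, map_add, hx, hy]

lemma sigmaC_incl (a : H) : sigmaC H (inclH H a) = inclH H a := by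
  rw [inclH_apply, sigmaC_tmul, map_one]

lemma span_incl : Submodule.span ℂ (Set.range (inclH H : H →ₐ[ℚ] ℂ ⊗[ℚ] H)) = ⊤ := by
  rw [eq_top_iff]
  rintro x -
  induction x using TensorProduct.induction_on with
  | zero => exact zero_mem _
  | tmul c a =>
      have : c ⊗ₜ[ℚ] a = c • inclH H a := by
        rw [inclH_apply, TensorProduct.smul_tmul', smul_eq_mul, mul_one]
      rw [this]
      exact Submodule.smul_mem _ _ (Submodule.subset_span ⟨a, rfl⟩)
  | add x y hx hy => exact add_mem hx hy

lemma inclH_induction {P : ℂ ⊗[ℚ] H → Prop} (h0 : P 0)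
    (hincl : ∀ a : H, P (inclH H a))
    (hsmul : ∀ (c : ℂ) x, P x → P (c • x))
    (hadd : ∀ x y, P x → P y → P (x + y)) : ∀ x, P x := by
  intro x
  induction x using TensorProduct.induction_on with
  | zero => exact h0
  | tmul c a =>
      have : c ⊗ₜ[ℚ] a = c • inclH H a := by
        rw [inclH_apply, TensorProduct.smul_tmul', smul_eq_mul, mul_one]
      rw [this]; exact hsmul c _ (hincl a)
  | add x y hx hy => exact hadd x y hx hy

end Basics

namespace HodgeAlgebraData
section Ext
set_option linter.unusedSectionVars false
set_option maxHeartbeats 1000000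
variable {H : Type} [Ring H] [Algebra ℚ H] [FiniteDimensional ℚ H] (D : HodgeAlgebraData H)

lemma tC_tmul (c : ℂ) (a : H) : D.tC (c ⊗ₜ[ℚ] a) = c ⊗ₜ[ℚ] (D.t a) := by
  simp [HodgeAlgebraData.tC]

lemma tC_incl (a : H) : D.tC (inclH H a) = inclH H (D.t a) := by
  rw [inclH_apply, inclH_apply, tC_tmul]

lemma tC_tC (x : ℂ ⊗[ℚ] H) : D.tC (D.tC x) = x := by
  induction x using TensorProduct.induction_on with
  | zero => simp
  | tmul c a => rw [tC_tmul, tC_tmul, D.t_invol]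
  | add x y hx hy => rw [map_add, map_add, hx, hy]

lemma tC_sigmaC (x : ℂ ⊗[ℚ] H) : D.tC (sigmaC H x) = sigmaC H (D.tC x) := by
  induction x using TensorProduct.induction_on with
  | zero => simp
  | tmul c a => rw [sigmaC_tmul, tC_tmul, tC_tmul, sigmaC_tmul]
  | add x y hx hy => rw [map_add, map_add, hx, hy, map_add, map_add]

lemma tC_mul (x y : ℂ ⊗[ℚ] H) : D.tC (x * y) = D.tC y * D.tC x := by
  induction x using inclH_induction with
  | h0 => simp
  | hsmul c x hx => rw [smul_mul_assoc, map_smul, hx, map_smul, mul_smul_comm]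
  | hadd x x' hx hx' => rw [add_mul, map_add, hx, hx', map_add, mul_add]
  | hincl a =>
    induction y using inclH_induction with
    | h0 => simp
    | hsmul c y hy => rw [mul_smul_comm, map_smul, hy, map_smul, smul_mul_assoc]
    | hadd y y' hy hy' => rw [mul_add, map_add, hy, hy', map_add, add_mul]
    | hincl b =>
        rw [← map_mul, tC_incl, tC_incl, tC_incl, D.t_mul, map_mul]

lemma BC_adj_left (x y z : ℂ ⊗[ℚ] H) : D.BC (x * y) z = D.BC y (D.tC x * z) := by
  induction x using inclH_induction with
  | h0 => simp
  | hsmul c x hx => simp only [smul_mul_assoc, map_smul, LinearMap.smul_apply, hx]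
  | hadd x x' hx hx' => simp only [add_mul, map_add, LinearMap.add_apply, hx, hx']
  | hincl a =>
    induction y using inclH_induction with
    | h0 => simp
    | hsmul c y hy => simp only [mul_smul_comm, smul_mul_assoc, map_smul,
        LinearMap.smul_apply, hy]
    | hadd y y' hy hy' => simp only [mul_add, add_mul, map_add, LinearMap.add_apply, hy, hy']
    | hincl b =>
      induction z using inclH_induction with
      | h0 => simp
      | hsmul c z hz => simp only [mul_smul_comm, map_smul, LinearMap.smul_apply, hz]
      | hadd z z' hz hz' => simp only [mul_add, map_add, LinearMap.add_apply, hz, hz']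
      | hincl c =>
          rw [tC_incl, ← map_mul, ← map_mul, D.BC_extends, D.BC_extends, D.adj_left]

lemma BC_adj_right (x y z : ℂ ⊗[ℚ] H) : D.BC (x * y) z = D.BC x (z * D.tC y) := by
  induction y using inclH_induction with
  | h0 => simp
  | hsmul c y hy => simp only [mul_smul_comm, map_smul, LinearMap.smul_apply, hy]
  | hadd y y' hy hy' => simp only [mul_add, map_add, LinearMap.add_apply, hy, hy']
  | hincl a =>
    induction x using inclH_induction with
    | h0 => simp
    | hsmul c x hx => simp only [smul_mul_assoc, map_smul, LinearMap.smul_apply, hx]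
    | hadd x x' hx hx' => simp only [add_mul, map_add, LinearMap.add_apply, hx, hx']
    | hincl b =>
      induction z using inclH_induction with
      | h0 => simp
      | hsmul c z hz => simp only [smul_mul_assoc, map_smul, LinearMap.smul_apply, hz]
      | hadd z z' hz hz' => simp only [add_mul, map_add, LinearMap.add_apply, hz, hz']
      | hincl c =>
          rw [tC_incl, ← map_mul, ← map_mul, D.BC_extends, D.BC_extends, D.adj_right]

lemma BC_tC_left (x z : ℂ ⊗[ℚ] H) : D.BC (D.tC x) z = D.BC 1 (x * z) := by
  conv_lhs => rw [show D.tC x = D.tC x * 1 from (mul_one _).symm]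
  rw [D.BC_adj_left, D.tC_tC]

end Ext
end HodgeAlgebraData

namespace HodgeAlgebraData
section Struct
set_option linter.unusedSectionVars false
set_option maxHeartbeats 1000000
variable {H : Type} [Ring H] [Algebra ℚ H] [FiniteDimensional ℚ H] (D : HodgeAlgebraData H)

lemma exists_decomp (v : ℂ ⊗[ℚ] H) :
    ∃ p ∈ D.H20, ∃ q ∈ D.H11, ∃ r ∈ D.H02, v = p + q + r := by
  have hv : v ∈ D.H20 ⊔ D.H11 ⊔ D.H02 := by rw [D.sup_top]; trivial
  rcases Submodule.mem_sup.1 hv with ⟨pq, hpq, r, hr, hv⟩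
  rcases Submodule.mem_sup.1 hpq with ⟨p, hp, q, hq, hpq'⟩
  exact ⟨p, hp, q, hq, r, hr, by rw [← hv, ← hpq']⟩

lemma decomp_zero {p q r : ℂ ⊗[ℚ] H} (hp : p ∈ D.H20) (hq : q ∈ D.H11) (hr : r ∈ D.H02)
    (h : p + q + r = 0) : p = 0 ∧ q = 0 ∧ r = 0 := by
  have hp0 : p = 0 := by
    have hmem : p ∈ D.H20 ⊓ (D.H11 ⊔ D.H02) := by
      refine ⟨hp, ?_⟩
      have hpe : p = -(q + r) := eq_neg_of_add_eq_zero_left (by rwa [← add_assoc])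
      rw [hpe, neg_add]
      exact add_mem (Submodule.mem_sup_left (neg_mem hq)) (Submodule.mem_sup_right (neg_mem hr))
    rw [D.disj1] at hmem; exact hmem
  rw [hp0, zero_add] at h
  have hq0 : q = 0 := by
    have hmem : q ∈ D.H11 ⊓ D.H02 :=
      ⟨hq, by rw [eq_neg_of_add_eq_zero_left h]; exact neg_mem hr⟩
    rw [D.disj2] at hmem; exact hmem
  rw [hq0, zero_add] at h
  exact ⟨hp0, hq0, h⟩

lemma mem_20_11_eq_zero {v : ℂ ⊗[ℚ] H} (h1 : v ∈ D.H20) (h2 : v ∈ D.H11) : v = 0 := by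
  have hmem : v ∈ D.H20 ⊓ (D.H11 ⊔ D.H02) := ⟨h1, Submodule.mem_sup_left h2⟩
  rw [D.disj1] at hmem; exact hmem

lemma mem_20_02_eq_zero {v : ℂ ⊗[ℚ] H} (h1 : v ∈ D.H20) (h2 : v ∈ D.H02) : v = 0 := by
  have hmem : v ∈ D.H20 ⊓ (D.H11 ⊔ D.H02) := ⟨h1, Submodule.mem_sup_right h2⟩
  rw [D.disj1] at hmem; exact hmem

lemma BC_20_20 {x y : ℂ ⊗[ℚ] H} (hx : x ∈ D.H20) (hy : y ∈ D.H20) : D.BC x y = 0 := by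
  have := D.orth_20_02 x hx (sigmaC H y) (D.sigma_20 y hy)
  rwa [sigmaC_sigmaC] at this

lemma BC_20_11 {x y : ℂ ⊗[ℚ] H} (hx : x ∈ D.H20) (hy : y ∈ D.H11) : D.BC x y = 0 := by
  have := D.orth_20_11 x hx (sigmaC H y) (D.sigma_11 y hy)
  rwa [sigmaC_sigmaC] at this

lemma BC_11_20 {x y : ℂ ⊗[ℚ] H} (hx : x ∈ D.H11) (hy : y ∈ D.H20) : D.BC x y = 0 := by
  have := D.orth_11_02 x hx (sigmaC H y) (D.sigma_20 y hy)
  rwa [sigmaC_sigmaC] at this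

lemma BC_11_02 {x y : ℂ ⊗[ℚ] H} (hx : x ∈ D.H11) (hy : y ∈ D.H02) : D.BC x y = 0 := by
  have h := D.BC_conj (sigmaC H x) (sigmaC H y)
  rw [sigmaC_sigmaC, sigmaC_sigmaC] at h
  rw [h, D.BC_11_20 (D.sigma_11 x hx) (D.sigma_02 y hy), map_zero]

lemma BC_02_11 {x y : ℂ ⊗[ℚ] H} (hx : x ∈ D.H02) (hy : y ∈ D.H11) : D.BC x y = 0 := by
  rw [D.BC_symm]; exact D.BC_11_02 hy hx

lemma BC_11_20' {x y : ℂ ⊗[ℚ] H} (hx : x ∈ D.H20) (hy : y ∈ D.H11) : D.BC y x = 0 := by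
  rw [D.BC_symm]; exact D.BC_20_11 hx hy

lemma BC_02_02 {x y : ℂ ⊗[ℚ] H} (hx : x ∈ D.H02) (hy : y ∈ D.H02) : D.BC x y = 0 := by
  have h := D.BC_conj (sigmaC H x) (sigmaC H y)
  rw [sigmaC_sigmaC, sigmaC_sigmaC] at h
  rw [h, D.BC_20_20 (D.sigma_02 x hx) (D.sigma_02 y hy), map_zero]

lemma pos_20' {x : ℂ ⊗[ℚ] H} (hx : x ∈ D.H20) (hne : D.BC x (sigmaC H x) = 0) : x = 0 := by
  by_contra h
  rcases D.pos_20 x hx h with ⟨h1, -⟩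
  rw [hne] at h1; simp at h1

lemma pos_02' {x : ℂ ⊗[ℚ] H} (hx : x ∈ D.H02) (hne : D.BC x (sigmaC H x) = 0) : x = 0 := by
  by_contra h
  rcases D.pos_02 x hx h with ⟨h1, -⟩
  rw [hne] at h1; simp at h1

lemma neg_11' {x : ℂ ⊗[ℚ] H} (hx : x ∈ D.H11) (hne : D.BC x (sigmaC H x) = 0) : x = 0 := by
  by_contra h
  rcases D.neg_11 x hx h with ⟨h1, -⟩
  rw [hne] at h1; simp at h1

lemma one_mem_11 : (1 : ℂ ⊗[ℚ] H) ∈ D.H11 := by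
  rcases D.exists_decomp 1 with ⟨e, he, f, hf, g, hg, hefg⟩
  have key : ∀ v : ℂ ⊗[ℚ] H, f * v = v := by
    have h20 : ∀ v ∈ D.H20, f * v = v := by
      intro v hv
      have hsum : e * v + f * v + g * v = v := by
        rw [← add_mul, ← add_mul, ← hefg, one_mul]
      rw [D.mul_20_20 e he v hv, zero_add] at hsum
      have := D.decomp_zero (p := f * v - v) (q := g * v) (r := 0)
        (sub_mem (D.mul_11_20 f hf v hv) hv) (D.mul_02_20 g hg v hv) (zero_mem _)
        (by rw [add_zero, sub_add_eq_add_sub, hsum, sub_self])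
      exact sub_eq_zero.1 this.1
    have h11 : ∀ v ∈ D.H11, f * v = v := by
      intro v hv
      have hsum : e * v + f * v + g * v = v := by
        rw [← add_mul, ← add_mul, ← hefg, one_mul]
      have := D.decomp_zero (p := e * v) (q := f * v - v) (r := g * v)
        (D.mul_20_11 e he v hv) (sub_mem (D.mul_11_11 f hf v hv) hv) (D.mul_02_11 g hg v hv)
        (by rw [show e * v + (f * v - v) + g * v = e * v + f * v + g * v - v from by abel,
          hsum, sub_self])
      exact sub_eq_zero.1 this.2.1
    have h02 : ∀ v ∈ D.H02, f * v = v := by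
      intro v hv
      have hsum : e * v + f * v + g * v = v := by
        rw [← add_mul, ← add_mul, ← hefg, one_mul]
      rw [D.mul_02_02 g hg v hv, add_zero] at hsum
      have := D.decomp_zero (p := 0) (q := e * v) (r := f * v - v)
        (zero_mem _) (D.mul_20_02 e he v hv) (sub_mem (D.mul_11_02 f hf v hv) hv)
        (by rw [zero_add, show e * v + (f * v - v) = e * v + f * v - v from by abel,
          hsum, sub_self])
      exact sub_eq_zero.1 this.2.2
    intro v
    rcases D.exists_decomp v with ⟨p, hp, q, hq, r, hr, rfl⟩
    rw [mul_add, mul_add, h20 p hp, h11 q hq, h02 r hr]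
  have hf1 : f = 1 := by rw [← mul_one f, key 1]
  rwa [hf1] at hf

lemma mem_20_of_orth {v : ℂ ⊗[ℚ] H} (h1 : ∀ z ∈ D.H20, D.BC v z = 0)
    (h2 : ∀ z ∈ D.H11, D.BC v z = 0) : v ∈ D.H20 := by
  rcases D.exists_decomp v with ⟨p, hp, q, hq, r, hr, rfl⟩
  have hr0 : r = 0 := by
    apply D.pos_02' hr
    have h := h1 (sigmaC H r) (D.sigma_02 r hr)
    simp only [map_add, LinearMap.add_apply, D.BC_20_20 hp (D.sigma_02 r hr),
      D.BC_11_20 hq (D.sigma_02 r hr), zero_add] at h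
    exact h
  have hq0 : q = 0 := by
    apply D.neg_11' hq
    have h := h2 (sigmaC H q) (D.sigma_11 q hq)
    simp only [map_add, LinearMap.add_apply, D.BC_20_11 hp (D.sigma_11 q hq),
      D.BC_02_11 hr (D.sigma_11 q hq), zero_add, add_zero] at h
    exact h
  rw [hq0, hr0, add_zero, add_zero]; exact hp

lemma tC_mem_20 {x : ℂ ⊗[ℚ] H} (hx : x ∈ D.H20) : D.tC x ∈ D.H20 := by
  apply D.mem_20_of_orth
  · intro z hz
    rw [D.BC_tC_left, D.mul_20_20 x hx z hz, map_zero]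
  · intro z hz
    rw [D.BC_tC_left]
    exact D.BC_11_20 D.one_mem_11 (D.mul_20_11 x hx z hz)

lemma W_le : D.W ≤ D.H20 ⊔ (D.H20 * D.H02) := by
  rw [HodgeAlgebraData.W]
  refine Submodule.mul_le.2 (fun x hx v _ => ?_)
  rcases D.exists_decomp v with ⟨p, hp, q, hq, r, hr, rfl⟩
  rw [mul_add, mul_add, D.mul_20_20 x hx p hp, zero_add]
  exact add_mem (Submodule.mem_sup_left (D.mul_20_11 x hx q hq))
    (Submodule.mem_sup_right (Submodule.mul_mem_mul hx hr))

lemma M_le_11 : D.H20 * D.H02 ≤ D.H11 :=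
  Submodule.mul_le.2 (fun x hx y hy => D.mul_20_02 x hx y hy)

lemma M_mul_02 {m r : ℂ ⊗[ℚ] H} (hm : m ∈ D.H20 * D.H02) (hr : r ∈ D.H02) : m * r = 0 :=
  Submodule.mul_induction_on hm
    (fun x _ y hy => by rw [mul_assoc, D.mul_02_02 y hy r hr, mul_zero])
    (fun a b ha hb => by rw [add_mul, ha, hb, add_zero])

lemma BC_W_W : ∀ w ∈ D.W, ∀ w' ∈ D.W, D.BC w w' = 0 := by
  have inner : ∀ x ∈ D.H20, ∀ v : ℂ ⊗[ℚ] H, ∀ w' ∈ D.W, D.BC (x * v) w' = 0 := by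
    intro x hx v w' hw'
    refine Submodule.mul_induction_on (hw' : w' ∈ D.H20 * ⊤) (fun x' hx' v' _ => ?_)
      (fun a b ha hb => by rw [map_add, ha, hb, add_zero])
    rw [D.BC_adj_left, ← mul_assoc, D.mul_20_20 (D.tC x) (D.tC_mem_20 hx) x' hx',
      zero_mul, map_zero]
  intro w hw w' hw'
  refine Submodule.mul_induction_on (hw : w ∈ D.H20 * ⊤) (fun x hx v _ => inner x hx v w' hw')
    (fun a b ha hb => by rw [map_add, LinearMap.add_apply, ha, hb, add_zero])

lemma W_mul_mem {w z : ℂ ⊗[ℚ] H} (hw : w ∈ D.W) : w * z ∈ D.W :=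
  Submodule.mul_induction_on (hw : w ∈ D.H20 * ⊤)
    (fun x hx v _ => by rw [mul_assoc]; exact Submodule.mul_mem_mul hx trivial)
    (fun a b ha hb => by rw [add_mul]; exact add_mem ha hb)

end Struct
end HodgeAlgebraData

namespace HodgeAlgebraData
section Main
set_option linter.unusedSectionVars false
set_option maxHeartbeats 1000000
variable {H : Type} [Ring H] [Algebra ℚ H] [FiniteDimensional ℚ H] (D : HodgeAlgebraData H)

section Gamma

variable {n : ℕ} (p : Fin n → ℂ ⊗[ℚ] H) (hp : ∀ j, p j ∈ D.H20)
  (hspan : D.H20 ≤ Submodule.span ℂ (Set.range p))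

/-- the auxiliary element `u = ∑ p_j σ(t(p_j))`. -/
def uElt : ℂ ⊗[ℚ] H := ∑ j, p j * sigmaC H (D.tC (p j))

include hp in
lemma uElt_mem : uElt D p ∈ D.H20 * D.H02 :=
  sum_mem fun j _ => Submodule.mul_mem_mul (hp j) (D.sigma_20 _ (D.tC_mem_20 (hp j)))

lemma key_s {x : ℂ ⊗[ℚ] H} :
    D.BC x (sigmaC H x * uElt D p)
      = ∑ j, D.BC (x * sigmaC H (p j)) (sigmaC H (x * sigmaC H (p j))) := by
  rw [uElt, Finset.mul_sum, map_sum]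
  refine Finset.sum_congr rfl fun j _ => ?_
  rw [← D.tC_sigmaC, ← mul_assoc, ← D.BC_adj_right]
  congr 1
  rw [sigmaC_mul, sigmaC_sigmaC]

include hp in
lemma x_mul_uElt {x : ℂ ⊗[ℚ] H} (hx : x ∈ D.H20) : x * uElt D p = 0 := by
  rw [uElt, Finset.mul_sum]
  refine Finset.sum_eq_zero fun j _ => ?_
  rw [← mul_assoc, D.mul_20_20 x hx (p j) (hp j), zero_mul]

lemma m_mul_uElt_eq (m : ℂ ⊗[ℚ] H) :
    m * uElt D p = ∑ j, (m * p j) * sigmaC H (D.tC (p j)) := by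
  rw [uElt, Finset.mul_sum]
  exact Finset.sum_congr rfl fun j _ => (mul_assoc _ _ _).symm

include hp in
lemma key_s1 {m : ℂ ⊗[ℚ] H} (hm : m ∈ D.H20 * D.H02) :
    D.BC m (sigmaC H m * uElt D p) = 0 := by
  rw [key_s]
  refine Finset.sum_eq_zero fun j _ => ?_
  rw [D.M_mul_02 hm (D.sigma_20 _ (hp j))]
  simp

lemma key_s2 (m : ℂ ⊗[ℚ] H) :
    D.BC m (sigmaC H m * sigmaC H (uElt D p))
      = ∑ j, D.BC (m * p j) (sigmaC H (m * p j)) := by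
  rw [← sigmaC_mul, m_mul_uElt_eq, map_sum, map_sum]
  refine Finset.sum_congr rfl fun j _ => ?_
  rw [sigmaC_mul, sigmaC_sigmaC, ← D.BC_adj_right]


def gammaElt : ℂ ⊗[ℚ] H := Complex.I • (uElt D p - sigmaC H (uElt D p))

lemma gammaElt_sigma : sigmaC H (gammaElt D p) = gammaElt D p := by
  rw [gammaElt, sigmaC_smul, map_sub, sigmaC_sigmaC, Complex.conj_I, neg_smul, ← smul_neg,
    neg_sub]

include hp in
lemma gammaElt_mem_11 : gammaElt D p ∈ D.H11 := by
  have h1 : uElt D p ∈ D.H11 := D.M_le_11 (D.uElt_mem p hp)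
  exact Submodule.smul_mem _ _ (sub_mem h1 (D.sigma_11 _ h1))

include hp in
lemma term_x {x : ℂ ⊗[ℚ] H} (hx : x ∈ D.H20) :
    Complex.I * D.BC x (sigmaC H x * gammaElt D p)
      = -∑ j, D.BC (x * sigmaC H (p j)) (sigmaC H (x * sigmaC H (p j))) := by
  have h0 : sigmaC H x * sigmaC H (uElt D p) = 0 := by
    rw [← sigmaC_mul, D.x_mul_uElt p hp hx, map_zero]
  rw [gammaElt, mul_smul_comm, mul_sub, h0, sub_zero, map_smul, smul_eq_mul,
    ← mul_assoc, Complex.I_mul_I, neg_one_mul, key_s]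

include hp in
lemma term_m {m : ℂ ⊗[ℚ] H} (hm : m ∈ D.H20 * D.H02) :
    Complex.I * D.BC m (sigmaC H m * gammaElt D p)
      = ∑ j, D.BC (m * p j) (sigmaC H (m * p j)) := by
  rw [gammaElt, mul_smul_comm, mul_sub, map_smul, smul_eq_mul, ← mul_assoc, Complex.I_mul_I,
    map_sub, D.key_s1 p hp hm, zero_sub, neg_one_mul, neg_neg, key_s2]

include hp in
lemma cross_xm {x m : ℂ ⊗[ℚ] H} (hx : x ∈ D.H20) (hm : m ∈ D.H20 * D.H02) :
    D.BC x (sigmaC H m * gammaElt D p) = 0 :=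
  D.BC_20_11 hx (D.mul_11_11 _ (D.sigma_11 _ (D.M_le_11 hm)) _ (D.gammaElt_mem_11 p hp))

include hp in
lemma cross_mx {x m : ℂ ⊗[ℚ] H} (hx : x ∈ D.H20) (hm : m ∈ D.H20 * D.H02) :
    D.BC m (sigmaC H x * gammaElt D p) = 0 :=
  D.BC_11_02 (D.M_le_11 hm) (D.mul_02_11 _ (D.sigma_20 x hx) _ (D.gammaElt_mem_11 p hp))

include hp hspan in
lemma exists_eta {x : ℂ ⊗[ℚ] H} (hx : x ∈ D.H20) (hne : x ≠ 0) :
    ∃ j, x * sigmaC H (p j) ≠ 0 := by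
  by_contra hc
  push_neg at hc
  have hall : ∀ pp ∈ D.H20, x * sigmaC H pp = 0 := by
    intro pp hpp
    refine Submodule.span_induction ?_ ?_ ?_ ?_ (hspan hpp)
    · rintro _ ⟨j, rfl⟩; exact hc j
    · rw [map_zero, mul_zero]
    · intro a b _ _ ha hb; rw [map_add, mul_add, ha, hb, add_zero]
    · intro c a _ ha; rw [sigmaC_smul, mul_smul_comm, ha, smul_zero]
  have h2 : D.BC x (sigmaC H x) = 0 := by
    have h4 : D.BC (x * sigmaC H (D.tC x)) 1 = 0 := by
      rw [hall (D.tC x) (D.tC_mem_20 hx)]; simp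
    rwa [D.BC_adj_right, D.tC_sigmaC, D.tC_tC, one_mul] at h4
  exact hne (D.pos_20' hx h2)

include hp hspan in
lemma exists_mu {m : ℂ ⊗[ℚ] H} (hm : m ∈ D.H20 * D.H02) (hne : m ≠ 0) :
    ∃ j, m * p j ≠ 0 := by
  by_contra hc
  push_neg at hc
  have hall : ∀ pp ∈ D.H20, m * pp = 0 := by
    intro pp hpp
    refine Submodule.span_induction ?_ ?_ ?_ ?_ (hspan hpp)
    · rintro _ ⟨j, rfl⟩; exact hc j
    · rw [mul_zero]
    · intro a b _ _ ha hb; rw [mul_add, ha, hb, add_zero]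
    · intro c a _ ha; rw [mul_smul_comm, ha, smul_zero]
  have hZ : ∀ v ∈ (⊤ : Submodule ℂ (ℂ ⊗[ℚ] H)) * D.H20, D.BC m v = 0 := by
    intro v hv
    refine Submodule.mul_induction_on hv (fun z _ pp hpp => ?_)
      (fun a b ha hb => by rw [map_add, ha, hb, add_zero])
    have h4 : D.BC (m * D.tC pp) z = 0 := by
      rw [hall (D.tC pp) (D.tC_mem_20 hpp)]; simp
    rwa [D.BC_adj_right, D.tC_tC] at h4
  have hs : sigmaC H m ∈ (⊤ : Submodule ℂ (ℂ ⊗[ℚ] H)) * D.H20 :=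
    Submodule.mul_induction_on hm
      (fun z _ y hy => by
        rw [sigmaC_mul]; exact Submodule.mul_mem_mul trivial (D.sigma_02 y hy))
      (fun a b ha hb => by rw [map_add]; exact add_mem ha hb)
  exact hne (D.neg_11' (D.M_le_11 hm) (hZ _ hs))

end Gamma

lemma exists_gamma :
    ∃ γ : ℂ ⊗[ℚ] H, sigmaC H γ = γ ∧
      ∀ w ∈ D.W, w ≠ 0 → 0 < (Complex.I * D.BC w (sigmaC H w * γ)).re := by
  classical
  set bP := Module.finBasis ℂ D.H20 with hbP
  set p : Fin (Module.finrank ℂ D.H20) → ℂ ⊗[ℚ] H := fun j => (bP j : ℂ ⊗[ℚ] H) with hpdef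
  have hp : ∀ j, p j ∈ D.H20 := fun j => (bP j).2
  have hspan : D.H20 ≤ Submodule.span ℂ (Set.range p) := by
    intro z hz
    have h := bP.sum_repr ⟨z, hz⟩
    have h2 : z = ∑ j, bP.repr ⟨z, hz⟩ j • p j := by
      have h3 := congrArg (Subtype.val : D.H20 → ℂ ⊗[ℚ] H) h
      simp only [AddSubmonoidClass.coe_finset_sum, SetLike.val_smul] at h3
      exact h3.symm
    rw [h2]
    exact sum_mem fun j _ => Submodule.smul_mem _ _ (Submodule.subset_span ⟨j, rfl⟩)
  refine ⟨gammaElt D p, gammaElt_sigma D p, ?_⟩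
  intro w hw hne
  rcases Submodule.mem_sup.1 (D.W_le hw) with ⟨x, hx, m, hm, rfl⟩
  have e1 : Complex.I * D.BC (x + m) (sigmaC H (x + m) * gammaElt D p)
      = Complex.I * D.BC x (sigmaC H x * gammaElt D p)
        + Complex.I * D.BC m (sigmaC H m * gammaElt D p) := by
    rw [map_add (sigmaC H), add_mul]
    simp only [map_add, LinearMap.add_apply, D.cross_xm p hp hx hm, D.cross_mx p hp hx hm]
    ring
  rw [e1, D.term_x p hp hx, D.term_m p hp hm, Complex.add_re, Complex.neg_re,
    Complex.re_sum, Complex.re_sum]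
  have heta_le : ∀ j, (D.BC (x * sigmaC H (p j)) (sigmaC H (x * sigmaC H (p j)))).re ≤ 0 := by
    intro j
    by_cases h : x * sigmaC H (p j) = 0
    · rw [h]; simp
    · exact le_of_lt (D.neg_11 _ (D.mul_20_02 x hx _ (D.sigma_20 _ (hp j))) h).1
  have hmu_ge : ∀ j, 0 ≤ (D.BC (m * p j) (sigmaC H (m * p j))).re := by
    intro j
    by_cases h : m * p j = 0
    · rw [h]; simp
    · exact le_of_lt (D.pos_20 _ (D.mul_11_20 m (D.M_le_11 hm) _ (hp j)) h).1
  have hA : 0 ≤ -∑ j, (D.BC (x * sigmaC H (p j)) (sigmaC H (x * sigmaC H (p j)))).re := by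
    rw [neg_nonneg]
    exact Finset.sum_nonpos fun j _ => heta_le j
  have hB : 0 ≤ ∑ j, (D.BC (m * p j) (sigmaC H (m * p j))).re :=
    Finset.sum_nonneg fun j _ => hmu_ge j
  rcases (show x ≠ 0 ∨ m ≠ 0 by
    by_contra hcc; push_neg at hcc; exact hne (by rw [hcc.1, hcc.2, add_zero])) with hxx | hmm
  · have : 0 < -∑ j, (D.BC (x * sigmaC H (p j)) (sigmaC H (x * sigmaC H (p j)))).re := by
      rcases D.exists_eta p hp hspan hx hxx with ⟨j0, hj0⟩
      have hlt := (D.neg_11 _ (D.mul_20_02 x hx _ (D.sigma_20 _ (hp j0))) hj0).1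
      have hpos : 0 < ∑ j, -(D.BC (x * sigmaC H (p j)) (sigmaC H (x * sigmaC H (p j)))).re :=
        Finset.sum_pos' (fun j _ => neg_nonneg.2 (heta_le j))
          ⟨j0, Finset.mem_univ j0, neg_pos.2 hlt⟩
      rwa [Finset.sum_neg_distrib] at hpos
    linarith
  · have : 0 < ∑ j, (D.BC (m * p j) (sigmaC H (m * p j))).re := by
      rcases D.exists_mu p hp hspan hm hmm with ⟨j0, hj0⟩
      refine Finset.sum_pos' (fun j _ => hmu_ge j) ⟨j0, Finset.mem_univ j0, ?_⟩
      exact (D.pos_20 _ (D.mul_11_20 m (D.M_le_11 hm) _ (hp j0)) hj0).1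
    linarith

end Main
end HodgeAlgebraData

namespace HodgeAlgebraData
section Density
set_option linter.unusedSectionVars false
set_option maxHeartbeats 1000000
variable {H : Type} [Ring H] [Algebra ℚ H] [FiniteDimensional ℚ H] (D : HodgeAlgebraData H)

/-- rational basis of `H`. -/
def eB (H : Type) [Ring H] [Algebra ℚ H] [FiniteDimensional ℚ H] :
    Module.Basis (Fin (Module.finrank ℚ H)) ℚ H := Module.finBasis ℚ H

/-- complex basis of `W`. -/
def bW : Module.Basis (Fin (Module.finrank ℂ D.W)) ℂ D.W := Module.finBasis ℂ D.W

def omg : Fin (Module.finrank ℂ D.W) → ℂ ⊗[ℚ] H := fun j => (D.bW j : ℂ ⊗[ℚ] H)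

def cCoef (j j' : Fin (Module.finrank ℂ D.W)) (l : Fin (Module.finrank ℚ H)) : ℂ :=
  Complex.I * D.BC (D.omg j) (sigmaC H (D.omg j') * inclH H (eB H l))

def DcFun (s : Fin (Module.finrank ℚ H) → ℝ) (j j' : Fin (Module.finrank ℂ D.W)) : ℂ :=
  ∑ l, (s l : ℂ) * D.cCoef j j' l

def FFun (s : Fin (Module.finrank ℚ H) → ℝ) (v : Fin (Module.finrank ℂ D.W) → ℂ) : ℝ :=
  ∑ j, ∑ j', (v j * (starRingEnd ℂ) (v j') * D.DcFun s j j').re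

def aElt (H : Type) [Ring H] [Algebra ℚ H] [FiniteDimensional ℚ H]
    (s : Fin (Module.finrank ℚ H) → ℝ) : ℂ ⊗[ℚ] H :=
  ∑ l, (s l : ℂ) • inclH H (eB H l)

def wvFun (v : Fin (Module.finrank ℂ D.W) → ℂ) : ℂ ⊗[ℚ] H := ∑ j, v j • D.omg j

lemma omg_mem (j : Fin (Module.finrank ℂ D.W)) : D.omg j ∈ D.W := (D.bW j).2

lemma wvFun_mem (v : Fin (Module.finrank ℂ D.W) → ℂ) : D.wvFun v ∈ D.W :=
  sum_mem fun j _ => Submodule.smul_mem _ _ (D.omg_mem j)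

lemma wvFun_ne {v : Fin (Module.finrank ℂ D.W) → ℂ} (hv : v ≠ 0) : D.wvFun v ≠ 0 := by
  intro h0
  have hli : LinearIndependent ℂ D.omg :=
    D.bW.linearIndependent.map' D.W.subtype (Submodule.ker_subtype _)
  have := (Fintype.linearIndependent_iff.1 hli) v h0
  exact hv (funext this)

lemma wvFun_repr {w : ℂ ⊗[ℚ] H} (hw : w ∈ D.W) :
    D.wvFun (fun j => D.bW.repr ⟨w, hw⟩ j) = w := by
  have h := D.bW.sum_repr ⟨w, hw⟩
  have h2 := congrArg (Subtype.val : D.W → ℂ ⊗[ℚ] H) h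
  simp only [AddSubmonoidClass.coe_finset_sum, SetLike.val_smul] at h2
  exact h2

lemma expand_key (s : Fin (Module.finrank ℚ H) → ℝ) (v : Fin (Module.finrank ℂ D.W) → ℂ) :
    Complex.I * D.BC (D.wvFun v) (sigmaC H (D.wvFun v) * aElt H s)
      = ∑ j, ∑ j', v j * (starRingEnd ℂ) (v j') * D.DcFun s j j' := by
  have h2 : sigmaC H (D.wvFun v) * aElt H s
      = ∑ j', ∑ l, ((starRingEnd ℂ) (v j') * (s l : ℂ)) •
          (sigmaC H (D.omg j') * inclH H (eB H l)) := by
    rw [wvFun, map_sum, aElt, Finset.sum_mul_sum]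
    refine Finset.sum_congr rfl fun j' _ => Finset.sum_congr rfl fun l _ => ?_
    rw [sigmaC_smul, smul_mul_smul_comm]
  have h3 : D.BC (D.wvFun v) = ∑ j, v j • D.BC (D.omg j) := by
    rw [wvFun, map_sum]; simp only [map_smul]
  rw [h2, h3]
  simp only [LinearMap.sum_apply, LinearMap.smul_apply, map_sum, map_smul, smul_eq_mul,
    DcFun, cCoef, Finset.mul_sum]
  conv_rhs => rw [Finset.sum_comm]
  refine Finset.sum_congr rfl fun j' _ => ?_
  rw [Finset.sum_comm]
  refine Finset.sum_congr rfl fun j _ => ?_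
  refine Finset.sum_congr rfl fun l _ => ?_
  ring

lemma expand_re (s : Fin (Module.finrank ℚ H) → ℝ) (v : Fin (Module.finrank ℂ D.W) → ℂ) :
    (Complex.I * D.BC (D.wvFun v) (sigmaC H (D.wvFun v) * aElt H s)).re = D.FFun s v := by
  rw [D.expand_key s v, FFun, Complex.re_sum]
  exact Finset.sum_congr rfl fun j _ => by rw [Complex.re_sum]

lemma FFun_sub (s s' : Fin (Module.finrank ℚ H) → ℝ) (v : Fin (Module.finrank ℂ D.W) → ℂ) :
    D.FFun s v - D.FFun s' v = D.FFun (s - s') v := by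
  simp only [FFun, DcFun, ← Finset.sum_sub_distrib, ← Complex.sub_re, ← mul_sub]
  refine Finset.sum_congr rfl fun j _ => Finset.sum_congr rfl fun j' _ => ?_
  congr 2
  refine Finset.sum_congr rfl fun l _ => ?_
  rw [Pi.sub_apply, Complex.ofReal_sub]
  ring

lemma FFun_smul (s : Fin (Module.finrank ℚ H) → ℝ) (c : ℂ) (v : Fin (Module.finrank ℂ D.W) → ℂ) :
    D.FFun s (c • v) = Complex.normSq c * D.FFun s v := by
  rw [FFun, FFun, Finset.mul_sum]
  refine Finset.sum_congr rfl fun j _ => ?_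
  rw [Finset.mul_sum]
  refine Finset.sum_congr rfl fun j' _ => ?_
  have : (c • v) j * (starRingEnd ℂ) ((c • v) j') * D.DcFun s j j'
      = (Complex.normSq c : ℂ) * (v j * (starRingEnd ℂ) (v j') * D.DcFun s j j') := by
    simp only [Pi.smul_apply, smul_eq_mul, map_mul]
    rw [← Complex.mul_conj]
    ring
  rw [this, Complex.re_ofReal_mul]

lemma FFun_bound (t : Fin (Module.finrank ℚ H) → ℝ) (v : Fin (Module.finrank ℂ D.W) → ℂ)
    (hv : ‖v‖ ≤ 1) {δ : ℝ} (hδ0 : 0 ≤ δ) (hδ : ∀ l, |t l| ≤ δ) :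
    |D.FFun t v| ≤ δ * ∑ j, ∑ j', ∑ l, ‖D.cCoef j j' l‖ := by
  have habs : ∀ (j j' : Fin (Module.finrank ℂ D.W)),
      |(v j * (starRingEnd ℂ) (v j') * D.DcFun t j j').re|
        ≤ δ * ∑ l, ‖D.cCoef j j' l‖ := by
    intro j j'
    have hvj : ‖v j‖ ≤ 1 := by
      exact le_trans (norm_le_pi_norm v j) hv
    have hvj' : ‖(starRingEnd ℂ) (v j')‖ ≤ 1 := by
      rw [Complex.norm_conj]; exact le_trans (norm_le_pi_norm v j') hv
    have hDc : ‖D.DcFun t j j'‖ ≤ δ * ∑ l, ‖D.cCoef j j' l‖ := by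
      rw [DcFun]
      refine le_trans (norm_sum_le _ _) ?_
      rw [Finset.mul_sum]
      refine Finset.sum_le_sum fun l _ => ?_
      rw [norm_mul, Complex.norm_real, Real.norm_eq_abs]
      exact mul_le_mul_of_nonneg_right (hδ l) (norm_nonneg _)
    refine le_trans (Complex.abs_re_le_norm _) ?_
    rw [norm_mul, norm_mul]
    have h1 : ‖v j‖ * ‖(starRingEnd ℂ) (v j')‖ ≤ 1 :=
      mul_le_one₀ hvj (norm_nonneg _) hvj'
    calc ‖v j‖ * ‖(starRingEnd ℂ) (v j')‖ * ‖D.DcFun t j j'‖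
        ≤ 1 * (δ * ∑ l, ‖D.cCoef j j' l‖) :=
          mul_le_mul h1 hDc (norm_nonneg _) zero_le_one
      _ = _ := one_mul _
  refine le_trans (Finset.abs_sum_le_sum_abs _ _) ?_
  rw [Finset.mul_sum]
  refine Finset.sum_le_sum fun j _ => ?_
  refine le_trans (Finset.abs_sum_le_sum_abs _ _) ?_
  rw [Finset.mul_sum]
  exact Finset.sum_le_sum fun j' _ => habs j j'

lemma FFun_cont (s : Fin (Module.finrank ℚ H) → ℝ) : Continuous (D.FFun s) := by
  refine continuous_finset_sum _ fun j _ => continuous_finset_sum _ fun j' _ => ?_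
  exact Complex.continuous_re.comp
    (((continuous_apply j).mul ((continuous_star.comp (continuous_apply j')))).mul
      continuous_const)

lemma real_coords {γ : ℂ ⊗[ℚ] H} (hγ : sigmaC H γ = γ) :
    ∃ s : Fin (Module.finrank ℚ H) → ℝ, γ = aElt H s := by
  set bC : Module.Basis (Fin (Module.finrank ℚ H)) ℂ (ℂ ⊗[ℚ] H) := Module.Basis.baseChange ℂ (eB H) with hbC
  have hb : ∀ l, bC l = inclH H (eB H l) := fun l => by
    rw [hbC, Module.Basis.baseChange_apply]; rfl
  have hσ : ∀ c : Fin (Module.finrank ℚ H) → ℂ,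
      sigmaC H (∑ l, c l • bC l) = ∑ l, (starRingEnd ℂ) (c l) • bC l := by
    intro c
    rw [map_sum]
    exact Finset.sum_congr rfl fun l _ => by rw [hb, sigmaC_smul, sigmaC_incl]
  set c : Fin (Module.finrank ℚ H) → ℂ := fun l => bC.repr γ l with hc
  have hγc : γ = ∑ l, c l • bC l := (bC.sum_repr γ).symm
  have h3 : ∑ l, (starRingEnd ℂ) (c l) • bC l = ∑ l, c l • bC l := by
    rw [← hσ c, ← hγc, hγ, hγc]
  have h4 := congrArg (fun v => ⇑(bC.repr v)) h3
  simp only [Module.Basis.repr_sum_self] at h4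
  refine ⟨fun l => (c l).re, ?_⟩
  rw [hγc, aElt]
  refine Finset.sum_congr rfl fun l _ => ?_
  rw [hb]
  congr 1
  exact (Complex.conj_eq_iff_re.1 (congrFun h4 l)).symm

lemma incl_aElt (q : Fin (Module.finrank ℚ H) → ℚ) :
    inclH H (∑ l, q l • eB H l) = aElt H (fun l => (q l : ℝ)) := by
  rw [map_sum, aElt]
  refine Finset.sum_congr rfl fun l _ => ?_
  rw [show inclH H (q l • eB H l) = q l • inclH H (eB H l) from
    map_smul (inclH H).toLinearMap _ _]
  rw [← Rat.cast_smul_eq_qsmul ℂ]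
  norm_cast

lemma exists_rational_a0 :
    ∃ a0 : H, ∀ w ∈ D.W, w ≠ 0 →
      0 < (Complex.I * D.BC w (sigmaC H w * inclH H a0)).re := by
  classical
  by_cases hW : D.W = ⊥
  · exact ⟨0, fun w hw hne => absurd (by rwa [hW, Submodule.mem_bot] at hw) hne⟩
  · obtain ⟨γ, hγσ, hγpos⟩ := D.exists_gamma
    obtain ⟨r, hr⟩ := real_coords hγσ
    -- positivity of F r on nonzero vectors
    have hFr : ∀ v : Fin (Module.finrank ℂ D.W) → ℂ, v ≠ 0 → 0 < D.FFun r v := by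
      intro v hv
      have h := hγpos (D.wvFun v) (D.wvFun_mem v) (D.wvFun_ne hv)
      rw [hr] at h
      rwa [D.expand_re r v] at h
    -- compactness
    have hmpos : 0 < Module.finrank ℂ D.W := by
      have : Nontrivial D.W := Submodule.nontrivial_iff_ne_bot.2 hW
      exact Module.finrank_pos
    haveI : NeZero (Module.finrank ℂ D.W) := ⟨hmpos.ne'⟩
    have hSne : (Metric.sphere (0 : Fin (Module.finrank ℂ D.W) → ℂ) 1).Nonempty := by
      refine ⟨fun _ => 1, ?_⟩
      rw [mem_sphere_zero_iff_norm, pi_norm_const]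
      simp
    obtain ⟨v0, hv0S, hmin⟩ := (isCompact_sphere (0 : Fin (Module.finrank ℂ D.W) → ℂ) 1)
      |>.exists_isMinOn hSne (D.FFun_cont r).continuousOn
    set ε := D.FFun r v0 with hεdef
    have hv0norm : ‖v0‖ = 1 := mem_sphere_zero_iff_norm.1 hv0S
    have hε : 0 < ε := hFr v0 (by intro h; rw [h] at hv0norm; simp at hv0norm)
    set Ctot := ∑ j, ∑ j', ∑ l, ‖D.cCoef j j' l‖ with hCtot
    have hCtot0 : 0 ≤ Ctot :=
      Finset.sum_nonneg fun j _ => Finset.sum_nonneg fun j' _ =>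
        Finset.sum_nonneg fun l _ => norm_nonneg _
    set δ := ε / (2 * (Ctot + 1)) with hδdef
    have hδpos : 0 < δ := by positivity
    -- rational approximation
    have hq : ∀ l : Fin (Module.finrank ℚ H), ∃ q : ℚ, |r l - (q : ℝ)| < δ :=
      fun l => exists_rat_near (r l) hδpos
    choose q hqd using hq
    set q' : Fin (Module.finrank ℚ H) → ℝ := fun l => (q l : ℝ) with hq'
    -- F q' positive on sphere
    have hsphere : ∀ v : Fin (Module.finrank ℂ D.W) → ℂ, ‖v‖ = 1 → 0 < D.FFun q' v := by
      intro v hvn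
      have h1 : ε ≤ D.FFun r v := hmin (mem_sphere_zero_iff_norm.2 hvn)
      have h2 : |D.FFun (r - q') v| ≤ δ * Ctot := by
        refine D.FFun_bound (r - q') v (le_of_eq hvn) hδpos.le fun l => ?_
        rw [Pi.sub_apply]
        exact (hqd l).le
      have h3 : D.FFun r v - D.FFun q' v = D.FFun (r - q') v := D.FFun_sub r q' v
      have h4 : δ * Ctot < ε := by
        rw [hδdef]
        rw [div_mul_eq_mul_div, div_lt_iff₀ (by positivity)]
        nlinarith
      have := abs_le.1 h2
      linarith
    -- F q' positive everywhere nonzero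
    have hpos : ∀ v : Fin (Module.finrank ℂ D.W) → ℂ, v ≠ 0 → 0 < D.FFun q' v := by
      intro v hv
      have hn : (0:ℝ) < ‖v‖ := norm_pos_iff.2 hv
      set u : Fin (Module.finrank ℂ D.W) → ℂ := ((‖v‖ : ℂ))⁻¹ • v with hu
      have hun : ‖u‖ = 1 := by
        rw [hu, norm_smul, norm_inv, Complex.norm_real, Real.norm_of_nonneg hn.le,
          inv_mul_cancel₀ hn.ne']
      have hveq : v = ((‖v‖ : ℂ)) • u := by
        rw [hu, smul_smul, mul_inv_cancel₀ (by exact_mod_cast hn.ne'), one_smul]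
      have := hsphere u hun
      rw [hveq, D.FFun_smul]
      have hns : 0 < Complex.normSq ((‖v‖ : ℂ)) := by
        rw [Complex.normSq_ofReal]; positivity
      positivity
    -- conclude
    refine ⟨∑ l, q l • eB H l, fun w hw hne => ?_⟩
    rw [incl_aElt q]
    have hrepr := D.wvFun_repr hw
    have hvne : (fun j => D.bW.repr ⟨w, hw⟩ j) ≠ 0 := by
      intro h0
      apply hne
      rw [← hrepr, h0]
      simp [wvFun]
    have := hpos _ hvne
    rw [← D.expand_re q' (fun j => D.bW.repr ⟨w, hw⟩ j)] at this
    rwa [hrepr] at this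

end Density
end HodgeAlgebraData

/-- There exists `a ∈ H` with `t(a) = −a` such that the skew form
`ω_a(x,y) := ⟨x, y·a⟩` has `W` as totally isotropic subspace and for every nonzero `w ∈ W`
the number `i·⟨w, σ(w)·a⟩` is real and strictly positive, i.e. the Hermitian form
`h_a(w,w') := i·⟨w, σ(w')·a⟩` is positive definite on `W`: `ω_a` polarizes the weight `1`
Hodge structure with `H^{1,0}`-part `W`. -/
theorem exists_polarization (D : HodgeAlgebraData H) :
    ∃ a : H, D.t a = -a ∧
      (∀ w ∈ D.W, ∀ w' ∈ D.W, D.BC w (w' * inclH H a) = 0) ∧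
      (∀ w ∈ D.W, w ≠ 0 →
        (Complex.I * D.BC w (sigmaC H w * inclH H a)).im = 0 ∧
        0 < (Complex.I * D.BC w (sigmaC H w * inclH H a)).re) := by
  obtain ⟨a0, h0⟩ := D.exists_rational_a0
  refine ⟨a0 - D.t a0, ?_, ?_, ?_⟩
  · rw [map_sub, D.t_invol, neg_sub]
  · intro w hw w' hw'
    exact D.BC_W_W w hw _ (D.W_mul_mem hw')
  · intro w hw hne
    have hconj : D.BC w (sigmaC H w * D.tC (inclH H a0))
        = (starRingEnd ℂ) (D.BC w (sigmaC H w * inclH H a0)) := by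
      rw [← D.BC_adj_right, D.BC_symm]
      calc D.BC (sigmaC H w) (w * inclH H a0)
          = D.BC (sigmaC H w) (sigmaC H (sigmaC H (w * inclH H a0))) := by rw [sigmaC_sigmaC]
        _ = (starRingEnd ℂ) (D.BC w (sigmaC H (w * inclH H a0))) := D.BC_conj _ _
        _ = _ := by rw [sigmaC_mul, sigmaC_incl]
    have hkey : Complex.I * D.BC w (sigmaC H w * inclH H (a0 - D.t a0))
        = 2 * ((Complex.I * D.BC w (sigmaC H w * inclH H a0)).re : ℂ) := by
      rw [map_sub, ← D.tC_incl, mul_sub, map_sub, mul_sub, hconj]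
      set z := D.BC w (sigmaC H w * inclH H a0)
      apply Complex.ext <;> simp [Complex.mul_re, Complex.mul_im] <;> ring
    rw [hkey]
    have hp := h0 w hw hne
    constructor
    · simp
    · have h2 : ((2:ℂ) * (((Complex.I * D.BC w (sigmaC H w * inclH H a0)).re : ℝ) : ℂ)).re
          = 2 * (Complex.I * D.BC w (sigmaC H w * inclH H a0)).re := by
        simp
      rw [h2]
      linarith
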